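/- Assume (W + log P)₊ ∈ L¹(Λ^N; P d^N x) and V_P ≠ ∅, and set M = sup_{V ∈ V_P} F_P(V), so M ∈ (0, ∞). Let (V_n) be a sequence in V_P with F_P(V_n) → M and Z(V_n) = 1 for every n, and suppose the sequence (e^{−V_n/2}) converges weakly in L²(Λ^N; e^{−W} d^N x) to some Π. Then e^{−V_n/2} converges to Π strongly in L²(Λ^N; e^{−W} d^N x); in particular ∫_{Λ^N} Π² e^{−W} d^N x = 1. -/

import Mathlib

open MeasureTheory Real Filter
open scoped ENNReal

noncomputable section

variable {Λ : Type*} [MeasurableSpace Λ]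

/-- The product measure on `Λ^k` (the `k`-fold product of `μ`). -/
def pm (μ : Measure Λ) (k : ℕ) : Measure (Fin k → Λ) := Measure.pi fun _ => μ

/-- A function on `Λ^k` is symmetric if it is invariant under all permutations
of its variables. -/
def IsSymm' {Λ : Type*} (k : ℕ) (f : (Fin k → Λ) → ℝ) : Prop :=
  ∀ σ : Equiv.Perm (Fin k), ∀ x, f (x ∘ σ) = f x

/-- The `m`-sum `Σ_{1 ≤ i₁ < ⋯ < i_m ≤ N} v(x_{i₁},…,x_{i_m})`. -/
def mSum {Λ : Type*} (N m : ℕ) (v : (Fin m → Λ) → ℝ) (x : Fin N → Λ) : ℝ :=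
  ∑ s ∈ Finset.powersetCard m (Finset.univ : Finset (Fin N)),
    if h : s.card = m then v (fun i => x (s.orderEmbOfFin h i)) else 0

/-- `V` has `m`-sum structure with (symmetric, measurable, real-valued) generator `v`. -/
def HasSumStruct (μ : Measure Λ) (N m : ℕ) (V : (Fin N → Λ) → ℝ)
    (v : (Fin m → Λ) → ℝ) : Prop :=
  IsSymm' m v ∧ Measurable v ∧ V =ᵐ[pm μ N] mSum N m v

/-- The measure `P d^N x`. -/
def Pmeas (μ : Measure Λ) (N : ℕ) (P : (Fin N → Λ) → ℝ) : Measure (Fin N → Λ) :=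
  (pm μ N).withDensity fun x => ENNReal.ofReal (P x)

/-- The measure `e^{-W} d^N x`. -/
def Wmeas (μ : Measure Λ) (N : ℕ) (W : (Fin N → Λ) → ℝ) : Measure (Fin N → Λ) :=
  (pm μ N).withDensity fun x => ENNReal.ofReal (Real.exp (-(W x)))

/-- The partition function `Z(V) = ∫ e^{-V-W} d^N x`, as an extended nonnegative real. -/
def ZE (μ : Measure Λ) (N : ℕ) (W V : (Fin N → Λ) → ℝ) : ℝ≥0∞ :=
  ∫⁻ x, ENNReal.ofReal (Real.exp (-(V x) - W x)) ∂(pm μ N)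

/-- The partition function `Z(V)` as a real number. -/
def Zfun (μ : Measure Λ) (N : ℕ) (W V : (Fin N → Λ) → ℝ) : ℝ :=
  (ZE μ N W V).toReal

/-- The functional `F_P(V) = exp(-∫ V P d^N x) / Z(V)`. -/
def FP (μ : Measure Λ) (N : ℕ) (P W V : (Fin N → Λ) → ℝ) : ℝ :=
  Real.exp (-∫ x, V x ∂(Pmeas μ N P)) / Zfun μ N W V

/-- Membership in the set `V_P`. -/
def memVP (μ : Measure Λ) (N m : ℕ) (P W V : (Fin N → Λ) → ℝ) : Prop :=
  Integrable V (Pmeas μ N P) ∧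
  Integrable (fun x => Real.exp (-(V x))) (Wmeas μ N W) ∧
  ∃ v, HasSumStruct μ N m V v

/-- Gluing `(y, z) ∈ Λ^m × Λ^{N-m}` into a point of `Λ^N`. -/
def glue {Λ : Type*} {N m : ℕ} (h : m ≤ N) (y : Fin m → Λ) (z : Fin (N - m) → Λ) :
    Fin N → Λ :=
  fun i => Fin.append y z (Fin.cast (by omega) i)

/-- The `m`-particle reduction `ρ^{(m)}` of `P`. -/
def rho (μ : Measure Λ) (N m : ℕ) (h : m ≤ N) (P : (Fin N → Λ) → ℝ)
    (y : Fin m → Λ) : ℝ :=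
  ∫ z, P (glue h y z) ∂(pm μ (N - m))

/-- The measure `ρ^{(m)} d^m x`. -/
def rhomeas (μ : Measure Λ) (N m : ℕ) (h : m ≤ N) (P : (Fin N → Λ) → ℝ) :
    Measure (Fin m → Λ) :=
  (pm μ m).withDensity fun y => ENNReal.ofReal (rho μ N m h P y)

/-- Membership in the set `V_{ρ^{(m)}}`. -/
def memVrho (μ : Measure Λ) (N m : ℕ) (h : m ≤ N) (P W V : (Fin N → Λ) → ℝ) : Prop :=
  Integrable (fun x => Real.exp (-(V x))) (Wmeas μ N W) ∧
  ∃ v, HasSumStruct μ N m V v ∧ Integrable v (rhomeas μ N m h P)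

/-- The `m`-particle density `ρ_U^{(m)}` associated with the potential `U`. -/
def rhoU (μ : Measure Λ) (N m : ℕ) (h : m ≤ N) (W U : (Fin N → Λ) → ℝ)
    (y : Fin m → Λ) : ℝ :=
  (∫ z, Real.exp (-(W (glue h y z)) - U (glue h y z)) ∂(pm μ (N - m))) / Zfun μ N W U



lemma measurable_mSum {N m : ℕ} {v : (Fin m → Λ) → ℝ} (hv : Measurable v) :
    Measurable (mSum N m v) := by
  unfold mSum
  refine Finset.measurable_sum _ (fun s _ => ?_)
  by_cases h : s.card = m
  · simp only [dif_pos h]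
    exact hv.comp (measurable_pi_lambda _ fun i => measurable_pi_apply _)
  · simp [h]

omit [MeasurableSpace Λ] in
lemma mSum_avg {N m : ℕ} (v1 v2 : (Fin m → Λ) → ℝ) (x : Fin N → Λ) :
    mSum N m (fun y => (v1 y + v2 y) / 2) x = (mSum N m v1 x + mSum N m v2 x) / 2 := by
  unfold mSum
  rw [← Finset.sum_add_distrib, Finset.sum_div]
  refine Finset.sum_congr rfl fun s _ => ?_
  by_cases h : s.card = m <;> simp [h]

/-- Let `M = sup_{V ∈ V_P} F_P(V)` (so `0 < M`).  If `(V_n)` is a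
maximizing sequence in `V_P` with `Z(V_n) = 1` and `(e^{-V_n/2})` converges weakly in
`L²(Λ^N; e^{-W} d^N x)` to some `Φ`, then `e^{-V_n/2} → Φ` strongly in
`L²(Λ^N; e^{-W} d^N x)`; in particular `∫ Φ² e^{-W} d^N x = 1`. -/
theorem statement8 (μ : Measure Λ) [SigmaFinite μ] (hμ : μ ≠ 0)
    (N m : ℕ) (hN : 2 ≤ N) (hm : 1 ≤ m) (hmN : m ≤ N)
    (P W : (Fin N → Λ) → ℝ) (hPmeas : Measurable P)
    (hPprob : ∫⁻ x, ENNReal.ofReal (P x) ∂(pm μ N) = 1)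
    (hPpos : ∀ᵐ x ∂(pm μ N), 0 < P x)
    (hWmeas : Measurable W)
    (hWlogP : Integrable (fun x => max (W x + Real.log (P x)) 0) (Pmeas μ N P))
    (M : ℝ)
    (hM : IsLUB {r : ℝ | ∃ V, memVP μ N m P W V ∧ FP μ N P W V = r} M)
    (V : ℕ → (Fin N → Λ) → ℝ)
    (hVn : ∀ n, memVP μ N m P W (V n))
    (hZn : ∀ n, ZE μ N W (V n) = 1)
    (hmaxseq : Tendsto (fun n => FP μ N P W (V n)) atTop (nhds M))
    (Φ : (Fin N → Λ) → ℝ) (hΦ : MemLp Φ 2 (Wmeas μ N W))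
    (hweak : ∀ g : (Fin N → Λ) → ℝ, MemLp g 2 (Wmeas μ N W) →
      Tendsto (fun n => ∫ x, Real.exp (-(V n x) / 2) * g x ∂(Wmeas μ N W)) atTop
        (nhds (∫ x, Φ x * g x ∂(Wmeas μ N W)))) :
    0 < M ∧
    Tendsto (fun n => eLpNorm (fun x => Real.exp (-(V n x) / 2) - Φ x) 2 (Wmeas μ N W))
      atTop (nhds 0) ∧
    ∫ x, (Φ x) ^ 2 ∂(Wmeas μ N W) = 1 := by
  classical
  set ν : Measure (Fin N → Λ) := Wmeas μ N W with hνdef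
  have hpm : pm μ N ≠ 0 := by
    intro h; rw [h] at hPprob; simp at hPprob
  have hVmeas : ∀ n, AEMeasurable (V n) (pm μ N) := by
    intro n
    obtain ⟨v, hsym, hv, hae⟩ := (hVn n).2.2
    exact (measurable_mSum hv).aemeasurable.congr hae.symm
  have hacc : ν ≪ pm μ N := by
    rw [hνdef]; exact withDensity_absolutelyContinuous _ _
  have hVmeasW : ∀ n, AEMeasurable (V n) ν := fun n => (hVmeas n).mono_ac hacc
  have hZE : ∀ U : (Fin N → Λ) → ℝ, AEMeasurable U (pm μ N) →
      ZE μ N W U = ∫⁻ x, ENNReal.ofReal (Real.exp (-(U x))) ∂ν := by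
    intro U hU
    have hg : AEMeasurable (fun x => ENNReal.ofReal (Real.exp (-(U x)))) (pm μ N) :=
      ENNReal.measurable_ofReal.comp_aemeasurable
        (Real.measurable_exp.comp_aemeasurable hU.neg)
    have hf : Measurable fun x => ENNReal.ofReal (Real.exp (-(W x))) :=
      ENNReal.measurable_ofReal.comp (Real.measurable_exp.comp hWmeas.neg)
    rw [hνdef]
    unfold Wmeas ZE
    rw [lintegral_withDensity_eq_lintegral_mul₀ hf.aemeasurable hg]
    refine lintegral_congr fun x => ?_
    have harg : -(U x) - W x = (-(W x)) + (-(U x)) := by ring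
    rw [harg, Real.exp_add, ENNReal.ofReal_mul (Real.exp_nonneg _)]
    rfl
  have hZ1 : ∀ n, Zfun μ N W (V n) = 1 := by
    intro n; unfold Zfun; rw [hZn n]; simp
  set a : ℕ → ℝ := fun n => ∫ x, V n x ∂(Pmeas μ N P) with hadef
  have hFP : ∀ n, FP μ N P W (V n) = Real.exp (-(a n)) := by
    intro n; unfold FP; rw [hZ1 n, div_one]
  have hM0 : 0 < M :=
    lt_of_lt_of_le (by rw [hFP 0]; exact Real.exp_pos _) (hM.1 ⟨V 0, hVn 0, rfl⟩)
  have hexpAEM : ∀ n, AEMeasurable (fun x => Real.exp (-(V n x) / 2)) ν := fun n =>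
    Real.measurable_exp.comp_aemeasurable ((hVmeasW n).neg.div_const 2)
  have hsq : ∀ n (x : Fin N → Λ),
      Real.exp (-(V n x) / 2) ^ 2 = Real.exp (-(V n x)) := by
    intro n x; rw [sq, ← Real.exp_add]; ring_nf
  have hmem : ∀ n, MemLp (fun x => Real.exp (-(V n x) / 2)) 2 ν := by
    intro n
    rw [memLp_two_iff_integrable_sq (hexpAEM n).aestronglyMeasurable]
    have heq : (fun x => Real.exp (-(V n x) / 2) ^ 2)
        = fun x => Real.exp (-(V n x)) := funext fun x => hsq n x
    rw [heq]; exact (hVn n).2.1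
  have hnorm1 : ∀ n, ∫ x, Real.exp (-(V n x)) ∂ν = 1 := by
    intro n
    rw [integral_eq_lintegral_of_nonneg_ae (f := fun x => Real.exp (-(V n x))) (ae_of_all _ fun x => Real.exp_nonneg _)
        (Real.measurable_exp.comp_aemeasurable (hVmeasW n).neg).aestronglyMeasurable,
      ← hZE (V n) (hVmeas n), hZn n]
    simp
  set u : ℕ → Lp ℝ 2 ν := fun n => (hmem n).toLp _ with hudef
  set φ : Lp ℝ 2 ν := hΦ.toLp Φ with hφdef
  have hinner1 : ∀ (f : (Fin N → Λ) → ℝ) (hf : MemLp f 2 ν) (g : Lp ℝ 2 ν),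
      (inner ℝ (hf.toLp f) g : ℝ) = ∫ x, f x * (g : (Fin N → Λ) → ℝ) x ∂ν := by
    intro f hf g
    rw [L2.inner_def]
    refine integral_congr_ae ?_
    filter_upwards [hf.coeFn_toLp] with x h1
    simp [RCLike.inner_apply, h1, mul_comm]
  have hinner2 : ∀ (f g : (Fin N → Λ) → ℝ) (hf : MemLp f 2 ν) (hg : MemLp g 2 ν),
      (inner ℝ (hf.toLp f) (hg.toLp g) : ℝ) = ∫ x, f x * g x ∂ν := by
    intro f g hf hg
    rw [L2.inner_def]
    refine integral_congr_ae ?_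
    filter_upwards [hf.coeFn_toLp, hg.coeFn_toLp] with x h1 h2
    simp [RCLike.inner_apply, h1, h2, mul_comm]
  have hunorm : ∀ n, ‖u n‖ ^ 2 = 1 := by
    intro n
    rw [← real_inner_self_eq_norm_sq]
    simp only [hudef]
    rw [hinner2 _ _ (hmem n) (hmem n)]
    rw [show (fun x => Real.exp (-(V n x) / 2) * Real.exp (-(V n x) / 2))
        = fun x => Real.exp (-(V n x)) from funext fun x => by rw [← hsq n x, sq]]
    exact hnorm1 n
  set b : ℕ → ℝ := fun n => Real.exp (-(a n) / 2) with hbdef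
  have hbsq : ∀ n, b n ^ 2 = FP μ N P W (V n) := by
    intro n; rw [hFP n]; simp only [hbdef]; rw [sq, ← Real.exp_add]; ring_nf
  have hbpos : ∀ n, 0 < b n := fun n => Real.exp_pos _
  have hbtends : Tendsto b atTop (nhds (Real.sqrt M)) := by
    have h2 : Tendsto (fun n => Real.sqrt (b n ^ 2)) atTop (nhds (Real.sqrt M)) := by
      refine (Real.continuous_sqrt.tendsto M).comp ?_
      have : (fun n => b n ^ 2) = fun n => FP μ N P W (V n) := funext hbsq
      rw [this]; exact hmaxseq
    refine h2.congr fun n => Real.sqrt_sq (hbpos n).le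
  -- key lower bound on inner ℝ products
  have hkey : ∀ n k, (b n * b k) / M ≤ (inner ℝ (u n) (u k) : ℝ) := by
    intro n k
    set V' : (Fin N → Λ) → ℝ := fun x => (V n x + V k x) / 2 with hV'def
    obtain ⟨vn, hsymn, hvn, haen⟩ := (hVn n).2.2
    obtain ⟨vk, hsymk, hvk, haek⟩ := (hVn k).2.2
    have hintP : Integrable V' (Pmeas μ N P) := ((hVn n).1.add (hVn k).1).div_const 2
    have hexpeq : ∀ x, Real.exp (-(V' x))
        = Real.exp (-(V n x) / 2) * Real.exp (-(V k x) / 2) := by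
      intro x
      rw [← Real.exp_add]
      congr 1
      show -((V n x + V k x) / 2) = _
      ring
    have hV'aem : AEMeasurable V' ν := ((hVmeasW n).add (hVmeasW k)).div_const 2
    have hexpaesm : AEStronglyMeasurable (fun x => Real.exp (-(V' x))) ν :=
      (Real.measurable_exp.comp_aemeasurable hV'aem.neg).aestronglyMeasurable
    have hintW : Integrable (fun x => Real.exp (-(V' x))) ν := by
      refine Integrable.mono (((hVn n).2.1.add (hVn k).2.1).div_const 2) hexpaesm ?_
      refine ae_of_all _ fun x => ?_
      rw [Real.norm_eq_abs, Real.norm_eq_abs, abs_of_nonneg (Real.exp_nonneg _), hexpeq x]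
      have h2 : 2 * Real.exp (-(V n x) / 2) * Real.exp (-(V k x) / 2)
          ≤ Real.exp (-(V n x) / 2) ^ 2 + Real.exp (-(V k x) / 2) ^ 2 :=
        two_mul_le_add_sq _ _
      rw [hsq n x, hsq k x] at h2
      have h3 : Real.exp (-(V n x) / 2) * Real.exp (-(V k x) / 2)
          ≤ (Real.exp (-(V n x)) + Real.exp (-(V k x))) / 2 := by linarith
      exact h3.trans (le_abs_self _)
    have hmemV' : memVP μ N m P W V' := by
      refine ⟨hintP, hintW, ⟨fun y => (vn y + vk y) / 2, ?_, (hvn.add hvk).div_const 2, ?_⟩⟩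
      · intro σ x
        show (vn (x ∘ σ) + vk (x ∘ σ)) / 2 = _
        rw [hsymn σ x, hsymk σ x]
      · filter_upwards [haen, haek] with x h1 h2
        show (V n x + V k x) / 2 = _
        rw [mSum_avg, h1, h2]
    have hFPle : FP μ N P W V' ≤ M := hM.1 ⟨V', hmemV', rfl⟩
    have hintV' : ∫ x, V' x ∂(Pmeas μ N P) = (a n + a k) / 2 := by
      show ∫ x, (V n x + V k x) / 2 ∂(Pmeas μ N P) = _
      rw [integral_div, integral_add (hVn n).1 (hVn k).1]
    have hIeq : (inner ℝ (u n) (u k) : ℝ) = ∫ x, Real.exp (-(V' x)) ∂ν := by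
      simp only [hudef]
      rw [hinner2 _ _ (hmem n) (hmem k)]
      exact integral_congr_ae (ae_of_all _ fun x => (hexpeq x).symm)
    have hZE' : ZE μ N W V' = ENNReal.ofReal (∫ x, Real.exp (-(V' x)) ∂ν) := by
      rw [hZE V' (((hVmeas n).add (hVmeas k)).div_const 2),
        ← ofReal_integral_eq_lintegral_ofReal hintW (ae_of_all _ fun x => Real.exp_nonneg _)]
    have hZpos : 0 < ZE μ N W V' := by
      unfold ZE
      have hcong : (fun x => ENNReal.ofReal (Real.exp (-(V' x) - W x)))
          =ᵐ[pm μ N] fun x => ENNReal.ofReal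
            (Real.exp (-((mSum N m vn x + mSum N m vk x) / 2) - W x)) := by
        filter_upwards [haen, haek] with x h1 h2
        show ENNReal.ofReal (Real.exp (-((V n x + V k x) / 2) - W x)) = _
        rw [h1, h2]
      rw [lintegral_congr_ae hcong]
      have hmeasg : Measurable fun x => ENNReal.ofReal
          (Real.exp (-((mSum N m vn x + mSum N m vk x) / 2) - W x)) :=
        ENNReal.measurable_ofReal.comp (Real.measurable_exp.comp
          ((((measurable_mSum hvn).add (measurable_mSum hvk)).div_const 2).neg.sub hWmeas))
      rw [lintegral_pos_iff_support hmeasg]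
      have hsupp : Function.support (fun x => ENNReal.ofReal
          (Real.exp (-((mSum N m vn x + mSum N m vk x) / 2) - W x))) = Set.univ := by
        ext x
        simp [Function.mem_support, ENNReal.ofReal_eq_zero, not_le, Real.exp_pos]
      rw [hsupp]
      exact Measure.measure_univ_pos.mpr hpm
    have hIpos : 0 < ∫ x, Real.exp (-(V' x)) ∂ν := by
      rw [hZE'] at hZpos
      exact ENNReal.ofReal_pos.mp hZpos
    have hZfun : Zfun μ N W V' = ∫ x, Real.exp (-(V' x)) ∂ν := by
      unfold Zfun; rw [hZE', ENNReal.toReal_ofReal hIpos.le]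
    have hFPval : FP μ N P W V' = (b n * b k) / ∫ x, Real.exp (-(V' x)) ∂ν := by
      unfold FP
      rw [hZfun, hintV']
      congr 1
      show Real.exp (-((a n + a k) / 2)) = Real.exp (-(a n) / 2) * Real.exp (-(a k) / 2)
      rw [← Real.exp_add]; congr 1; ring
    rw [hFPval, div_le_iff₀ hIpos] at hFPle
    rw [hIeq, div_le_iff₀ hM0]
    linarith [hFPle]
  -- Cauchy sequence
  have hcauchy : CauchySeq u := by
    rw [Metric.cauchySeq_iff]
    intro ε hε
    have hprod : Tendsto (fun p : ℕ × ℕ => b p.1 * b p.2) atTop (nhds M) := by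
      have h := (hbtends.comp (tendsto_fst : Tendsto Prod.fst (atTop ×ˢ atTop) atTop)).mul
        (hbtends.comp (tendsto_snd : Tendsto Prod.snd (atTop ×ˢ atTop) atTop))
      rw [Real.mul_self_sqrt hM0.le] at h
      rwa [← Filter.prod_atTop_atTop_eq]
    have hlt : M * (1 - ε ^ 2 / 4) < M := by nlinarith [pow_pos hε 2]
    have hev : ∀ᶠ p : ℕ × ℕ in atTop, M * (1 - ε ^ 2 / 4) < b p.1 * b p.2 :=
      hprod.eventually (eventually_gt_nhds hlt)
    rw [Filter.eventually_atTop] at hev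
    obtain ⟨p0, hp0⟩ := hev
    refine ⟨max p0.1 p0.2, fun n hn k hk => ?_⟩
    have hbk : M * (1 - ε ^ 2 / 4) < b n * b k :=
      hp0 (n, k) ⟨le_trans (le_max_left _ _) hn, le_trans (le_max_right _ _) hk⟩
    have hinnerlb : (1 - ε ^ 2 / 4 : ℝ) ≤ (inner ℝ (u n) (u k) : ℝ) := by
      calc (1 - ε ^ 2 / 4 : ℝ) ≤ (b n * b k) / M := by
            rw [le_div_iff₀ hM0]; linarith [hbk]
        _ ≤ _ := hkey n k
    have hdist : dist (u n) (u k) ^ 2 < ε ^ 2 := by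
      rw [dist_eq_norm, norm_sub_sq_real, hunorm n, hunorm k]
      have hε2 : 0 < ε ^ 2 := pow_pos hε 2
      linarith [hinnerlb]
    exact lt_of_pow_lt_pow_left₀ 2 hε.le hdist
  obtain ⟨g, hg⟩ := cauchySeq_tendsto_of_complete hcauchy
  -- weak limit identification
  have hwk : ∀ f : Lp ℝ 2 ν, Tendsto (fun n => (inner ℝ (u n) f : ℝ)) atTop
      (nhds (inner ℝ φ f)) := by
    intro f
    have hfm : MemLp (fun x => (f : (Fin N → Λ) → ℝ) x) 2 ν := Lp.memLp f
    have h1 := hweak _ hfm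
    have e1 : ∀ n, (inner ℝ (u n) f : ℝ)
        = ∫ x, Real.exp (-(V n x) / 2) * (f : (Fin N → Λ) → ℝ) x ∂ν := by
      intro n; simp only [hudef]; exact hinner1 _ (hmem n) f
    have e2 : (inner ℝ φ f : ℝ) = ∫ x, Φ x * (f : (Fin N → Λ) → ℝ) x ∂ν := by
      simp only [hφdef]; exact hinner1 _ hΦ f
    rw [e2]
    exact h1.congr fun n => (e1 n).symm
  have hgφ : g = φ := by
    refine ext_inner_right ℝ fun f => ?_
    have h1 : Tendsto (fun n => (inner ℝ (u n) f : ℝ)) atTop (nhds (inner ℝ g f)) :=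
      hg.inner tendsto_const_nhds
    exact tendsto_nhds_unique h1 (hwk f)
  rw [hgφ] at hg
  have hnormconv : Tendsto (fun n => ‖u n - φ‖) atTop (nhds 0) :=
    tendsto_iff_norm_sub_tendsto_zero.mp hg
  -- conclusions
  have hcoe : ∀ n, eLpNorm (fun x => Real.exp (-(V n x) / 2) - Φ x) 2 ν
      = ENNReal.ofReal ‖u n - φ‖ := by
    intro n
    have hae : (fun x => Real.exp (-(V n x) / 2) - Φ x)
        =ᵐ[ν] (u n - φ : Lp ℝ 2 ν) := by
      filter_upwards [Lp.coeFn_sub (u n) φ, (hmem n).coeFn_toLp, hΦ.coeFn_toLp]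
        with x h1 h2 h3
      rw [h1, Pi.sub_apply]
      simp only [hudef, hφdef]
      rw [h2, h3]
    rw [eLpNorm_congr_ae hae, Lp.norm_def,
      ENNReal.ofReal_toReal (Lp.eLpNorm_ne_top _)]
  have hconv2 : Tendsto (fun n => eLpNorm (fun x => Real.exp (-(V n x) / 2) - Φ x) 2 ν)
      atTop (nhds 0) := by
    have h := (ENNReal.continuous_ofReal.tendsto 0).comp hnormconv
    simp only [hcoe]
    simpa only [ENNReal.ofReal_zero, Function.comp_def] using h
  have hφnorm : ‖φ‖ = 1 := by
    have h1 : Tendsto (fun n => ‖u n‖) atTop (nhds ‖φ‖) :=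
      (continuous_norm.tendsto φ).comp hg
    have h2 : (fun n => ‖u n‖) = fun _ => 1 := by
      funext n
      nlinarith [hunorm n, norm_nonneg (u n)]
    rw [h2] at h1
    exact tendsto_nhds_unique h1 tendsto_const_nhds
  have hint : ∫ x, (Φ x) ^ 2 ∂ν = 1 := by
    have h1 : ∫ x, Φ x * Φ x ∂ν = (inner ℝ φ φ : ℝ) := by
      simp only [hφdef]; exact (hinner2 Φ Φ hΦ hΦ).symm
    rw [real_inner_self_eq_norm_sq, hφnorm] at h1
    have h2 : (fun x => (Φ x) ^ 2) = fun x => Φ x * Φ x := funext fun x => sq (Φ x) ▸ rfl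
    rw [show ∫ x, (Φ x) ^ 2 ∂ν = ∫ x, Φ x * Φ x ∂ν from
      integral_congr_ae (ae_of_all _ fun x => sq (Φ x))]
    rw [h1]; norm_num
  exact ⟨hM0, hconv2, hint⟩


end
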